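/- Let S* = (μ+β+ρ)/σm and consider the 3×3 real matrix J with rows (−A/S*, −σm·S*, 0), (A/S* − μ, 0, 0), (0, β, −μ−r) (the Jacobian at the endemic equilibrium E*). Then the characteristic polynomial of J in the variable λ equals (λ + μ + r)·(λ² + (A/S*)·λ + μ(μ+β+ρ)(R0 − 1)). Consequently, if R0 > 1, then every complex eigenvalue of J has negative real part. -/

import Mathlib

open Polynomial

lemma spec_root_charpoly {n : Type*} [Fintype n] [DecidableEq n]
    (M : Matrix n n ℂ) (z : ℂ) (hz : z ∈ spectrum ℂ M) :
    M.charpoly.eval z = 0 := by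
  rw [spectrum.mem_iff] at hz
  rw [Matrix.isUnit_iff_isUnit_det] at hz
  have hdet : ((algebraMap ℂ (Matrix n n ℂ)) z - M).det = 0 := by
    by_contra h
    exact hz (isUnit_iff_ne_zero.mpr h)
  rw [Matrix.charpoly, eval_det, Matrix.matPolyEquiv_charmatrix]
  simpa [Matrix.algebraMap_eq_diagonal, Pi.algebraMap_def] using hdet

lemma quad_aux (b c : ℝ) (hb : 0 < b) (hc : 0 < c) (z : ℂ)
    (h : z ^ 2 + (b : ℂ) * z + (c : ℂ) = 0) : z.re < 0 := by
  have hre : z.re ^ 2 - z.im ^ 2 + b * z.re + c = 0 := by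
    have := congrArg Complex.re h
    simp only [Complex.add_re, Complex.mul_re, Complex.ofReal_re, Complex.ofReal_im,
      Complex.zero_re, pow_two] at this ⊢
    nlinarith [this]
  have him : z.im * (2 * z.re + b) = 0 := by
    have := congrArg Complex.im h
    simp only [Complex.add_im, Complex.mul_im, Complex.mul_re, Complex.ofReal_re,
      Complex.ofReal_im, Complex.zero_im, pow_two] at this
    nlinarith [this]
  by_cases hy : z.im = 0
  · rw [hy] at hre
    simp at hre
    nlinarith [hre, sq_nonneg z.re]
  · rcases mul_eq_zero.mp him with h'' | h''
    · exact absurd h'' hy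
    · linarith

/-- stability of `E*`, Theorem 3.2: the characteristic
polynomial of the Jacobian at `E*` factors as
`(λ + μ + r)(λ² + (A/S*)λ + μ(μ+β+ρ)(R0−1))`, hence for `R0 > 1` every
complex eigenvalue has negative real part. -/
theorem stmt15 (A μ ρ r β σm σs : ℝ)
    (hA : 0 < A) (hμ : 0 < μ) (hρ : 0 < ρ) (hr : 0 < r) (hβ : 0 < β)
    (hσm : 0 < σm) (hσs : 0 < σs)
    (R0 : ℝ) (hR0 : R0 = A * σm / (μ * (μ + β + ρ)))
    (Sstar : ℝ) (hS : Sstar = (μ + β + ρ) / σm)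
    (J : Matrix (Fin 3) (Fin 3) ℝ)
    (hJ : J = !![-(A / Sstar), -(σm * Sstar), 0;
                 A / Sstar - μ, 0, 0;
                 0, β, -μ - r]) :
    J.charpoly = (X + C (μ + r))
        * (X ^ 2 + C (A / Sstar) * X + C (μ * (μ + β + ρ) * (R0 - 1))) ∧
    (R0 > 1 →
      ∀ z : ℂ, z ∈ spectrum ℂ (J.map (Complex.ofReal ·)) → z.re < 0) := by
  have hk : 0 < μ + β + ρ := by linarith
  have hSpos : 0 < Sstar := by rw [hS]; positivity
  have h1 : σm * Sstar = μ + β + ρ := by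
    rw [hS]; field_simp
  have h2 : μ * (μ + β + ρ) * (R0 - 1) = σm * Sstar * (A / Sstar - μ) := by
    rw [hR0, h1]
    field_simp
    linear_combination A * h1
  have hfac : J.charpoly = (X + C (μ + r))
      * (X ^ 2 + C (A / Sstar) * X + C (μ * (μ + β + ρ) * (R0 - 1))) := by
    subst hJ
    rw [h2]
    rw [Matrix.charpoly, Matrix.det_fin_three]
    simp [Matrix.charmatrix_apply, Matrix.diagonal_apply, Fin.ext_iff,
      Matrix.cons_val', Matrix.cons_val_zero, Matrix.cons_val_one, Matrix.head_cons,
      Matrix.empty_val', Matrix.cons_val_fin_one, Matrix.head_fin_const,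
      Matrix.cons_val_two, Matrix.tail_cons, Matrix.of_apply]
    ring
  refine ⟨hfac, ?_⟩
  intro hR1 z hz
  have hcp : (J.map (Complex.ofReal ·)).charpoly = J.charpoly.map (Complex.ofRealHom) :=
    Matrix.charpoly_map J Complex.ofRealHom
  have hroot := spec_root_charpoly _ z hz
  rw [hcp, hfac] at hroot
  simp only [Polynomial.eval_map, Polynomial.eval₂_mul, Polynomial.eval₂_add,
    Polynomial.eval₂_pow, Polynomial.eval₂_X, Polynomial.eval₂_C,
    Complex.ofRealHom_eq_coe] at hroot
  have hbpos : 0 < A / Sstar := by positivity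
  have hcpos : 0 < μ * (μ + β + ρ) * (R0 - 1) := by
    have : 0 < R0 - 1 := by linarith
    positivity
  rcases mul_eq_zero.mp hroot with h | h
  · have hz' : z = -((μ : ℂ) + r) := by
      push_cast at h
      linear_combination h
    rw [hz']
    simp only [Complex.neg_re, Complex.add_re, Complex.ofReal_re]
    linarith
  · exact quad_aux _ _ hbpos hcpos z h
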